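/- Let d ≥ 2 and let f : [0,1] → ℝ be a continuous convex function. For every ε ∈ [0,1] there exist density matrices ρ and σ of dimension d such that T(ρ,σ) = ε and |S_f(ρ) − S_f(σ)| = Δ_{f;d}(ε); in other words, the bound Δ_{f;d}(ε) on |S_f(ρ)−S_f(σ)| is exact for each ε ∈ [0,1]. -/

import Mathlib

open Matrix BigOperators ComplexOrder Polynomial

section helpers

lemma multiset_eig' {d : ℕ} (μ : Fin d → ℝ)
    (hA : (Matrix.diagonal (fun i => (μ i : ℂ))).IsHermitian) :
    (Finset.univ.val.map hA.eigenvalues) = Finset.univ.val.map μ := by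
  have hdet : ∀ (v : Fin d → ℂ) (z : ℂ),
      (z • (1 : Matrix (Fin d) (Fin d) ℂ) - Matrix.diagonal v).det = ∏ i, (z - v i) := by
    intro v z
    rw [Matrix.smul_one_eq_diagonal, Matrix.diagonal_sub, Matrix.det_diagonal]
  set U : Matrix (Fin d) (Fin d) ℂ := (Matrix.IsHermitian.eigenvectorUnitary hA : Matrix (Fin d) (Fin d) ℂ) with hU
  have hUU : U * star U = 1 := (Matrix.mem_unitaryGroup_iff).mp (Matrix.IsHermitian.eigenvectorUnitary hA).2
  have hst := hA.spectral_theorem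
  rw [Unitary.conjStarAlgAut_apply, ← hU] at hst
  have key : ∀ z : ℂ, ∏ i, (z - (hA.eigenvalues i : ℂ)) = ∏ i, (z - (μ i : ℂ)) := by
    intro z
    have e1 : z • (1 : Matrix (Fin d) (Fin d) ℂ) - Matrix.diagonal (fun i => (μ i : ℂ))
        = U * (z • (1 : Matrix (Fin d) (Fin d) ℂ) - Matrix.diagonal (RCLike.ofReal ∘ hA.eigenvalues)) * star U := by
      conv_lhs => rw [hst]
      rw [Matrix.mul_sub, Matrix.sub_mul, Matrix.mul_smul, Matrix.mul_one, Matrix.smul_mul, hUU]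
    have h2 := congrArg Matrix.det e1
    rw [hdet, Matrix.det_mul, Matrix.det_mul, hdet] at h2
    have h3 : U.det * (star U).det = 1 := by rw [← Matrix.det_mul, hUU, Matrix.det_one]
    rw [mul_comm U.det, mul_assoc, h3, mul_one] at h2
    exact h2.symm
  have hpoly : (∏ i, (X - C ((hA.eigenvalues i : ℂ)))) = ∏ i, (X - C ((μ i : ℂ))) := by
    apply Polynomial.funext
    intro z
    simp only [eval_prod, eval_sub, eval_X, eval_C]
    exact key z
  have hroots := congrArg Polynomial.roots hpoly
  have hrw : ∀ (v : Fin d → ℂ), (∏ i, (X - C (v i))).roots = Finset.univ.val.map v := by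
    intro v
    rw [Finset.prod_eq_multiset_prod,
      show Multiset.map (fun i => X - C (v i)) Finset.univ.val
        = Multiset.map (fun a => X - C a) (Multiset.map v Finset.univ.val) from
        (Multiset.map_map (fun a => X - C a) v Finset.univ.val).symm,
      Polynomial.roots_multiset_prod_X_sub_C]
  rw [hrw, hrw] at hroots
  have := congrArg (Multiset.map Complex.re) hroots
  rw [Multiset.map_map, Multiset.map_map] at this
  simpa using this

lemma sum_g_eig' {d : ℕ} {A : Matrix (Fin d) (Fin d) ℂ} (μ : Fin d → ℝ)
    (hAμ : A = Matrix.diagonal (fun i => (μ i : ℂ))) (hA : A.IsHermitian) (g : ℝ → ℝ) :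
    ∑ i, g (hA.eigenvalues i) = ∑ i, g (μ i) := by
  subst hAμ
  have h := multiset_eig' μ hA
  calc ∑ i, g (hA.eigenvalues i) = ((Finset.univ.val.map hA.eigenvalues).map g).sum := by
        rw [Multiset.map_map]; rfl
    _ = ((Finset.univ.val.map μ).map g).sum := by rw [h]
    _ = ∑ i, g (μ i) := by rw [Multiset.map_map]; rfl

lemma sum_ite_zero' {d : ℕ} [NeZero d] (a b : ℝ) :
    ∑ i : Fin d, (if i = 0 then a else b) = a + ((d:ℝ) - 1) * b := by
  have h : ∀ i : Fin d, (if i = 0 then a else b) = (if i = 0 then a - b else 0) + b :=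
    fun i => by split <;> ring
  rw [Finset.sum_congr rfl (fun i _ => h i), Finset.sum_add_distrib,
    Finset.sum_ite_eq' Finset.univ (0 : Fin d) (fun _ => a - b), Finset.sum_const]
  simp only [Finset.mem_univ, if_true, Finset.card_univ, Fintype.card_fin, nsmul_eq_mul]
  ring

end helpers

theorem fEntropy_bound_exact (d : ℕ) (hd : 2 ≤ d) (f : ℝ → ℝ)
    (hf_cont : ContinuousOn f (Set.Icc 0 1))
    (hf_conv : ConvexOn ℝ (Set.Icc 0 1) f)
    (ε : ℝ) (hε : ε ∈ Set.Icc (0 : ℝ) 1) :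
    ∃ (ρ σ : Matrix (Fin d) (Fin d) ℂ) (hρ : ρ.PosSemidef) (hσ : σ.PosSemidef),
      ρ.trace = 1 ∧ σ.trace = 1 ∧
      (1/2) * ∑ i, |(hρ.isHermitian.sub hσ.isHermitian).eigenvalues i| = ε ∧
      |(-∑ i, f (hρ.isHermitian.eigenvalues i)) - (-∑ i, f (hσ.isHermitian.eigenvalues i))| =
        f 1 - f (1 - ε) - ((d : ℝ) - 1) * (f (ε / ((d : ℝ) - 1)) - f 0) := by
  haveI : NeZero d := ⟨by omega⟩
  obtain ⟨hε0, hε1⟩ := hε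
  have hd2 : (2:ℝ) ≤ (d:ℝ) := by exact_mod_cast hd
  have hd0 : (0:ℝ) < (d:ℝ) - 1 := by linarith
  set t : ℝ := ε / ((d:ℝ) - 1) with ht
  have ht0 : 0 ≤ t := div_nonneg hε0 hd0.le
  have ht1 : t ≤ 1 := by rw [ht, div_le_one hd0]; linarith
  have hεt : ε = ((d:ℝ) - 1) * t := by rw [ht]; field_simp
  set μρ : Fin d → ℝ := fun i => if i = 0 then 1 else 0 with hμρ
  set μσ : Fin d → ℝ := fun i => if i = 0 then 1 - ε else t with hμσ
  set ν : Fin d → ℝ := fun i => if i = 0 then ε else -t with hν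
  have hρpsd : (Matrix.diagonal (fun i => (μρ i : ℂ))).PosSemidef := by
    refine Matrix.PosSemidef.diagonal ?_
    intro i
    show (0:ℂ) ≤ ((μρ i : ℝ) : ℂ)
    rw [Complex.zero_le_real]
    simp only [hμρ]
    split <;> norm_num
  have hσpsd : (Matrix.diagonal (fun i => (μσ i : ℂ))).PosSemidef := by
    refine Matrix.PosSemidef.diagonal ?_
    intro i
    show (0:ℂ) ≤ ((μσ i : ℝ) : ℂ)
    rw [Complex.zero_le_real]
    simp only [hμσ]
    split
    · linarith
    · exact ht0
  have hdiff : Matrix.diagonal (fun i => (μρ i : ℂ)) - Matrix.diagonal (fun i => (μσ i : ℂ))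
      = Matrix.diagonal (fun i => (ν i : ℂ)) := by
    have e0 : (fun i => ((μρ i : ℂ)) - ((μσ i : ℂ))) = fun i => ((ν i : ℂ)) := by
      funext i
      simp only [hμρ, hμσ, hν]
      split <;> push_cast <;> ring
    rw [Matrix.diagonal_sub, e0]
  refine ⟨_, _, hρpsd, hσpsd, ?_, ?_, ?_, ?_⟩
  · rw [Matrix.trace_diagonal]
    have : ∑ i, ((μρ i : ℂ)) = ((∑ i, μρ i : ℝ) : ℂ) := by push_cast; rfl
    rw [this]
    simp only [hμρ]
    rw [sum_ite_zero']
    norm_num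
  · rw [Matrix.trace_diagonal]
    have : ∑ i, ((μσ i : ℂ)) = ((∑ i, μσ i : ℝ) : ℂ) := by push_cast; rfl
    rw [this]
    simp only [hμσ]
    rw [sum_ite_zero']
    rw [← hεt]
    norm_num
  · rw [sum_g_eig' ν hdiff (hρpsd.isHermitian.sub hσpsd.isHermitian) (fun x => |x|)]
    have : ∀ i : Fin d, |ν i| = if i = 0 then |ε| else |(-t)| := by
      intro i; simp only [hν]; split <;> rfl
    rw [Finset.sum_congr rfl (fun i _ => this i), sum_ite_zero', abs_neg,
      abs_of_nonneg hε0, abs_of_nonneg ht0, ← hεt]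
    ring
  · rw [sum_g_eig' μρ rfl hρpsd.isHermitian f, sum_g_eig' μσ rfl hσpsd.isHermitian f]
    have e3 : ∀ i : Fin d, f (μρ i) = if i = 0 then f 1 else f 0 := by
      intro i; simp only [hμρ]; split <;> rfl
    have e4 : ∀ i : Fin d, f (μσ i) = if i = 0 then f (1 - ε) else f t := by
      intro i; simp only [hμσ]; split <;> rfl
    rw [Finset.sum_congr rfl (fun i _ => e3 i), Finset.sum_congr rfl (fun i _ => e4 i),
      sum_ite_zero', sum_ite_zero']
    have hΔ : 0 ≤ f 1 - f (1 - ε) - ((d:ℝ) - 1) * (f t - f 0) := by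
      rcases eq_or_lt_of_le hε0 with h0 | h0
      · have ht' : t = 0 := by rw [ht, ← h0, zero_div]
        rw [← h0, ht']
        norm_num
      · have htpos : 0 < t := by rw [ht]; exact div_pos h0 hd0
        have m0 : (0:ℝ) ∈ Set.Icc (0:ℝ) 1 := by norm_num
        have m1 : (1:ℝ) ∈ Set.Icc (0:ℝ) 1 := by norm_num
        have mt : t ∈ Set.Icc (0:ℝ) 1 := ⟨ht0, ht1⟩
        have me : 1 - ε ∈ Set.Icc (0:ℝ) 1 := ⟨by linarith, by linarith⟩
        have s1 : (f t - f 0) / (t - 0) ≤ (f 1 - f 0) / (1 - 0) :=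
          hf_conv.secant_mono m0 mt m1 (ne_of_gt htpos) one_ne_zero ht1
        rw [sub_zero, sub_zero, div_one] at s1
        have s2 : (f 0 - f 1) / (0 - 1) ≤ (f (1 - ε) - f 1) / ((1 - ε) - 1) :=
          hf_conv.secant_mono m1 m0 me (by norm_num) (by intro h; apply ne_of_gt h0; linarith [sub_eq_iff_eq_add.mp h]) (by linarith)
        have e1 : (f 0 - f 1) / ((0:ℝ) - 1) = f 1 - f 0 := by
          rw [show (0:ℝ) - 1 = -1 by ring, div_neg, div_one, neg_sub]
        have e2 : (f (1 - ε) - f 1) / ((1 - ε) - 1) = (f 1 - f (1 - ε)) / ε := by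
          rw [show (1 - ε) - 1 = -ε by ring, div_neg, ← neg_div, neg_sub]
        rw [e1, e2] at s2
        have chain : (f t - f 0) / t ≤ (f 1 - f (1 - ε)) / ε := le_trans s1 s2
        rw [div_le_div_iff₀ htpos h0] at chain
        have h6 : (((d:ℝ) - 1) * (f t - f 0)) * t ≤ (f 1 - f (1 - ε)) * t := by
          calc (((d:ℝ) - 1) * (f t - f 0)) * t = (f t - f 0) * ε := by rw [hεt]; ring
            _ ≤ (f 1 - f (1 - ε)) * t := chain
        have h7 := le_of_mul_le_mul_right h6 htpos
        linarith
    rw [show (-(f 1 + ((d:ℝ) - 1) * f 0)) - (-(f (1 - ε) + ((d:ℝ) - 1) * f t))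
        = -(f 1 - f (1 - ε) - ((d:ℝ) - 1) * (f t - f 0)) by ring, abs_neg,
      abs_of_nonneg hΔ]
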